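/- In the quotient algebra B(m,k) = B_0(m,k)/J, if idempotent states x and y are far (i.e., |x_j − y_j| > 1 for some j in their increasing enumerations), then I_x·B(m,k)·I_y = 0. -/

import Mathlib

/-- Idempotent states: `k`-element subsets of `{0,1,...,m}`. -/
abbrev IdemState (m k : ℕ) := {x : Finset (Fin (m + 1)) // x.card = k}

/-- The weight `v^x` at coordinate `c : Fin m`, representing the paper's
`v^x_{c+1} = #{a ∈ x : a ≥ c+1}` (coordinate `c` corresponds to the strand
labelled `c+1`). -/
def vwt {m : ℕ} (x : Finset (Fin (m + 1))) (c : Fin m) : ℕ :=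
  (x.filter (fun a => (c : ℕ) < a.val)).card

/-- Twice the minimal relative weight: `2·w^{x,y}_{c+1} = |v^x_{c+1} − v^y_{c+1}|`. -/
def wnum {m : ℕ} (x y : Finset (Fin (m + 1))) (c : Fin m) : ℕ :=
  ((vwt x c : ℤ) - (vwt y c : ℤ)).natAbs

/-- Basis elements of `B₀(m,k)`: a pair of idempotent states together with a
monomial `U_1^{s_1} ⋯ U_m^{s_m}` (recorded by its exponents); the basis element
is `φ^{x,y}(U^s)`. -/
structure BGen (m k : ℕ) where
  l : IdemState m k
  r : IdemState m k
  s : Fin m → ℕ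
deriving DecidableEq

/-- The exponents `t_i = w^{x,y}_i + w^{y,z}_i − w^{x,z}_i` of the correction
monomial `g^{x,y,z} = U_1^{t_1} ⋯ U_m^{t_m}`. -/
def texp {m k : ℕ} (x y z : IdemState m k) (c : Fin m) : ℕ :=
  (wnum x.1 y.1 c + wnum y.1 z.1 c - wnum x.1 z.1 c) / 2

/-- The product of two basis elements of `B₀(m,k)`:
`φ^{x,y}(U^s) * φ^{y',z}(U^{s'})` is zero (i.e. `none`) unless `y = y'`, in
which case it equals `φ^{x,z}(U^s · U^{s'} · g^{x,y,z})`. -/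
def mulBGen {m k : ℕ} (a b : BGen m k) : Option (BGen m k) :=
  if a.r = b.l then
    some ⟨a.l, b.r, fun c => a.s c + b.s c + texp a.l a.r b.r c⟩
  else none

/-- The underlying `F₂`-vector space of the algebra `B₀(m,k)`: formal `F₂`-linear
combinations of the basis elements `φ^{x,y}(U^s)`. -/
def B0 (m k : ℕ) : Type := BGen m k →₀ ZMod 2

noncomputable instance {m k : ℕ} : AddCommGroup (B0 m k) :=
  inferInstanceAs (AddCommGroup (BGen m k →₀ ZMod 2))

/-- View an element of `B₀(m,k)` as a finitely supported function. -/
def B0.toF {m k : ℕ} (f : B0 m k) : BGen m k →₀ ZMod 2 := f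

/-- The multiplication of `B₀(m,k)`, the bilinear extension of `mulBGen`. -/
noncomputable def mulB {m k : ℕ} (f g : B0 m k) : B0 m k :=
  (B0.toF f).sum fun a ca =>
    (B0.toF g).sum fun b cb =>
      match mulBGen a b with
      | some c => Finsupp.single c (ca * cb)
      | none => 0

noncomputable instance {m k : ℕ} : Mul (B0 m k) := ⟨mulB⟩

/-- The basis element `φ^{x,y}(U^s)` of `B₀(m,k)`. -/
noncomputable def bElt {m k : ℕ} (g : BGen m k) : B0 m k := Finsupp.single g 1

/-- The basic idempotent `I_x ∈ B₀(m,k)`. -/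
noncomputable def idemElt {m k : ℕ} (x : IdemState m k) : B0 m k :=
  bElt ⟨x, x, fun _ => 0⟩

/-- The central element `U_i = Σ_x φ^{x,x}(U_i)`; the index `i : Fin m`
corresponds to the paper's `U_{i+1}`. -/
noncomputable def UElt {m k : ℕ} (i : Fin m) : B0 m k :=
  ∑ x : IdemState m k, bElt (⟨x, x, fun c => if c = i then 1 else 0⟩ : BGen m k)

/-- The right-shift `R = Σ R^x`, moving an occupied position from `i` to `i+1`
(the paper's `R_{i+1}`). -/
noncomputable def RElt {m k : ℕ} (i : Fin m) : B0 m k :=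
  ∑ p : IdemState m k × IdemState m k,
    if i.castSucc ∈ p.1.1 ∧ i.succ ∉ p.1.1 ∧
        p.2.1 = insert i.succ (p.1.1.erase i.castSucc) then
      bElt (⟨p.1, p.2, fun _ => 0⟩ : BGen m k)
    else 0

/-- The left-shift `L = Σ L^y`, moving an occupied position from `i+1` to `i`
(the paper's `L_{i+1}`). -/
noncomputable def LElt {m k : ℕ} (i : Fin m) : B0 m k :=
  ∑ p : IdemState m k × IdemState m k,
    if i.succ ∈ p.1.1 ∧ i.castSucc ∉ p.1.1 ∧
        p.2.1 = insert i.castSucc (p.1.1.erase i.succ) then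
      bElt (⟨p.1, p.2, fun _ => 0⟩ : BGen m k)
    else 0

/-- The generating set of the two-sided ideal `J`: the elements
`L_{i+1}·L_i`, `R_i·R_{i+1}`, and `I_x·U_j` for states `x` with
`x ∩ {j−1, j} = ∅`. -/
def JGenerators (m k : ℕ) : Set (B0 m k) :=
  {z | ∃ i i' : Fin m, (i' : ℕ) = (i : ℕ) + 1 ∧
        (z = LElt i' * LElt i ∨ z = RElt i * RElt i')} ∪
  {z | ∃ (j : Fin m) (x : IdemState m k),
        j.castSucc ∉ x.1 ∧ j.succ ∉ x.1 ∧ z = idemElt x * UElt j}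

/-- The two-sided ideal `J ⊆ B₀(m,k)` generated by `JGenerators`:  since
`B₀(m,k)` is unital, it is the additive subgroup generated by all products
`a·g·b` with `g` a generator. -/
noncomputable def JIdeal (m k : ℕ) : AddSubgroup (B0 m k) :=
  AddSubgroup.closure {z | ∃ g ∈ JGenerators m k, ∃ a b : B0 m k, z = a * g * b}

/-- The map `φ^{x,y} : F₂[U_1,...,U_m] → I_x·B₀(m,k)·I_y`. -/
noncomputable def phiMap {m k : ℕ} (x y : IdemState m k)
    (p : MvPolynomial (Fin m) (ZMod 2)) : B0 m k :=
  ∑ d ∈ p.support, Finsupp.single (⟨x, y, fun c => d c⟩ : BGen m k) (MvPolynomial.coeff d p)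

/-- Two idempotent states are *far* if some pair of corresponding entries of
their increasing enumerations differs by more than `1`. -/
def FarStates {m k : ℕ} (x y : IdemState m k) : Prop :=
  ∃ j : Fin k,
    1 < |(((x.1.orderIsoOfFin x.2 j : Fin (m + 1)) : ℕ) : ℤ) -
          (((y.1.orderIsoOfFin y.2 j : Fin (m + 1)) : ℕ) : ℤ)|

/-- `[i+1, j]` is a *generating interval* for `(x, y)`: here `0 ≤ i < j ≤ m`,
`i, j ∉ x ∩ y`, every `t` with `i < t < j` lies in `x ∩ y`, and `w^{x,y}_t = 0`
for all `i+1 ≤ t ≤ j` (a paper index `t` corresponds to the coordinate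
`c = t − 1 : Fin m`). -/
def GenInterval {m k : ℕ} (x y : IdemState m k) (i j : ℕ) : Prop :=
  i < j ∧ j ≤ m ∧
  (∀ a : Fin (m + 1), (a.val = i ∨ a.val = j) → ¬(a ∈ x.1 ∧ a ∈ y.1)) ∧
  (∀ a : Fin (m + 1), i < a.val → a.val < j → a ∈ x.1 ∧ a ∈ y.1) ∧
  (∀ c : Fin m, i ≤ (c : ℕ) → (c : ℕ) < j → wnum x.1 y.1 c = 0)

/-- The monomial `U_{i+1} ⋯ U_j` associated to a generating interval. -/
noncomputable def intervalMonomial {m : ℕ} (i j : ℕ) : MvPolynomial (Fin m) (ZMod 2) :=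
  ∏ c ∈ Finset.univ.filter (fun c : Fin m => i ≤ (c : ℕ) ∧ (c : ℕ) < j),
    MvPolynomial.X c

open Classical in
/-- The ideal `I(x,y) ⊆ F₂[U_1,...,U_m]`: everything if `x` and `y` are far,
and otherwise the ideal generated by the monomials of the generating intervals
for `(x,y)`. -/
noncomputable def IIdeal {m k : ℕ} (x y : IdemState m k) :
    Ideal (MvPolynomial (Fin m) (ZMod 2)) :=
  if FarStates x y then ⊤
  else Ideal.span {q | ∃ i j : ℕ, GenInterval x y i j ∧ q = intervalMonomial i j}

section PartA
variable {m k : ℕ}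

lemma mulB_zero_left (g : B0 m k) : mulB 0 g = 0 := by
  simp [mulB, B0.toF, Finsupp.sum_zero_index]
  exact Finsupp.sum_zero_index

lemma mulB_zero_right (f : B0 m k) : mulB f 0 = 0 := by
  simp [mulB, B0.toF, Finsupp.sum_zero_index]
  exact Finset.sum_eq_zero fun _ _ => Finsupp.sum_zero_index

lemma mulB_add_left (f₁ f₂ g : B0 m k) :
    mulB (f₁ + f₂) g = mulB f₁ g + mulB f₂ g := by
  unfold mulB B0.toF
  apply Finsupp.sum_add_index'
  · intro a
    apply Finset.sum_eq_zero
    intro b _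
    cases h : mulBGen a b <;> simp [h] <;> rfl
  · intro a c₁ c₂
    rw [← Finsupp.sum_add (f := (g : BGen m k →₀ ZMod 2))]
    congr 1; funext b cb
    cases h : mulBGen a b <;> simp [add_mul, Finsupp.single_add] <;> rfl

lemma mulB_add_right (f g₁ g₂ : B0 m k) :
    mulB f (g₁ + g₂) = mulB f g₁ + mulB f g₂ := by
  unfold mulB B0.toF
  rw [← Finsupp.sum_add (f := (f : BGen m k →₀ ZMod 2))]
  congr 1; funext a ca
  apply Finsupp.sum_add_index'
  · intro b
    cases h : mulBGen a b <;> simp <;> rfl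
  · intro b c₁ c₂
    cases h : mulBGen a b <;> simp [mul_add, Finsupp.single_add] <;> rfl

lemma mulB_sum_left {ι : Type*} (S : Finset ι) (F : ι → B0 m k) (g : B0 m k) :
    mulB (∑ i ∈ S, F i) g = ∑ i ∈ S, mulB (F i) g := by
  classical
  induction S using Finset.cons_induction with
  | empty => simp [mulB_zero_left]
  | cons a S ha ih => rw [Finset.sum_cons, Finset.sum_cons, mulB_add_left, ih]

lemma mulB_sum_right {ι : Type*} (S : Finset ι) (f : B0 m k) (F : ι → B0 m k) :
    mulB f (∑ i ∈ S, F i) = ∑ i ∈ S, mulB f (F i) := by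
  classical
  induction S using Finset.cons_induction with
  | empty => simp [mulB_zero_right]
  | cons a S ha ih => rw [Finset.sum_cons, Finset.sum_cons, mulB_add_right, ih]

lemma mulB_single_single (a b : BGen m k) (ca cb : ZMod 2) :
    mulB (Finsupp.single a ca) (Finsupp.single b cb) =
      match mulBGen a b with
      | some c => Finsupp.single c (ca * cb)
      | none => 0 := by
  classical
  by_cases ha : ca = 0
  · subst ha
    cases h : mulBGen a b <;>
      simp [mulB, B0.toF, Finsupp.sum_zero_index, h] <;> rfl
  by_cases hb : cb = 0
  · subst hb
    cases h : mulBGen a b <;>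
      simp [mulB, B0.toF, Finsupp.sum_zero_index, Finsupp.sum_single_index,
        h] <;> rfl
  simp only [mulB, B0.toF]
  rw [Finsupp.sum_single_index, Finsupp.sum_single_index]
  · cases h : mulBGen a b <;> simp [h] <;> rfl
  · rw [Finsupp.sum_single_index]
    · cases h : mulBGen a b <;> simp [h] <;> rfl
    · cases h : mulBGen a b <;> simp [h] <;> rfl

end PartA
section PartB
variable {m k : ℕ}

lemma mul_def (f g : B0 m k) : f * g = mulB f g := rfl

lemma wnum_self (x : Finset (Fin (m+1))) (c : Fin m) : wnum x x c = 0 := by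
  simp [wnum]

lemma texp_left (x z : IdemState m k) (c : Fin m) : texp x x z c = 0 := by
  simp [texp, wnum_self]

lemma texp_right (x z : IdemState m k) (c : Fin m) : texp x z z c = 0 := by
  simp [texp, wnum_self]

lemma idem_single_idem (x y : IdemState m k) (g : BGen m k) (c : ZMod 2) :
    mulB (mulB (idemElt x) (Finsupp.single g c)) (idemElt y) =
      if g.l = x ∧ g.r = y then Finsupp.single (⟨x, y, g.s⟩ : BGen m k) c else 0 := by
  classical
  obtain ⟨l, r, s⟩ := g
  simp only [idemElt, bElt]
  rw [mulB_single_single]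
  by_cases hl : l = x
  · subst hl
    have h1 : mulBGen (⟨l, l, fun _ => 0⟩ : BGen m k) ⟨l, r, s⟩ =
        some ⟨l, r, s⟩ := by
      simp [mulBGen, texp_left]
    rw [h1]
    rw [mulB_single_single]
    by_cases hr : r = y
    · subst hr
      have h2 : mulBGen (⟨l, r, s⟩ : BGen m k) ⟨r, r, fun _ => 0⟩ =
          some ⟨l, r, s⟩ := by
        simp [mulBGen, texp_right]
      rw [h2]
      simp
      rfl
    · have h2 : mulBGen (⟨l, r, s⟩ : BGen m k) ⟨y, y, fun _ => 0⟩ = none := by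
        simp only [mulBGen]
        rw [if_neg]
        simpa using hr
      rw [h2]
      simp [hr]
      rfl
  · have h1 : mulBGen (⟨x, x, fun _ => 0⟩ : BGen m k) ⟨l, r, s⟩ = none := by
      simp only [mulBGen]
      rw [if_neg]
      simpa using fun h => hl h.symm
    rw [h1]
    erw [mulB_zero_left]
    simp [hl]
    rfl

end PartB
section PartC
variable {m k : ℕ}

lemma castSucc_ne_succ (a : Fin m) : a.castSucc ≠ a.succ := by
  intro h
  have := congrArg Fin.val h
  simp at this

lemma vwt_move (s : Finset (Fin (m+1))) (a : Fin m) (ha : a.castSucc ∈ s)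
    (ha' : a.succ ∉ s) (c : Fin m) :
    vwt (insert a.succ (s.erase a.castSucc)) c
      = vwt s c + (if (c : ℕ) = (a : ℕ) then 1 else 0) := by
  classical
  unfold vwt
  rw [Finset.filter_insert, Finset.filter_erase]
  have hcs : (a.castSucc : Fin (m+1)).val = (a : ℕ) := by simp
  have hsu : (a.succ : Fin (m+1)).val = (a : ℕ) + 1 := by simp
  rcases lt_trichotomy (c : ℕ) (a : ℕ) with h | h | h
  · have hp : (c : ℕ) < (a.succ : Fin (m+1)).val := by omega
    rw [if_pos hp]
    have hmem : a.castSucc ∈ s.filter (fun b => (c : ℕ) < b.val) := by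
      simp only [Finset.mem_filter]
      exact ⟨ha, by omega⟩
    have hnotmem : a.succ ∉ (s.filter (fun b => (c : ℕ) < b.val)).erase a.castSucc := by
      intro hmem'
      exact ha' (Finset.mem_of_mem_filter _ (Finset.mem_of_mem_erase hmem'))
    rw [Finset.card_insert_of_notMem hnotmem, Finset.card_erase_of_mem hmem]
    have hpos : 0 < (s.filter (fun b => (c : ℕ) < b.val)).card :=
      Finset.card_pos.2 ⟨_, hmem⟩
    have : ¬ (c : ℕ) = (a : ℕ) := by omega
    rw [if_neg this]
    omega
  · have hp : (c : ℕ) < (a.succ : Fin (m+1)).val := by omega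
    rw [if_pos hp]
    have hnot : a.castSucc ∉ s.filter (fun b => (c : ℕ) < b.val) := by
      simp only [Finset.mem_filter]
      rintro ⟨-, h2⟩
      omega
    rw [Finset.erase_eq_of_notMem hnot]
    have hnotmem : a.succ ∉ s.filter (fun b => (c : ℕ) < b.val) := by
      intro hmem'
      exact ha' (Finset.mem_of_mem_filter _ hmem')
    rw [Finset.card_insert_of_notMem hnotmem, if_pos h]
  · have hp : ¬ (c : ℕ) < (a.succ : Fin (m+1)).val := by omega
    rw [if_neg hp]
    have hnot : a.castSucc ∉ s.filter (fun b => (c : ℕ) < b.val) := by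
      simp only [Finset.mem_filter]
      rintro ⟨-, h2⟩
      omega
    rw [Finset.erase_eq_of_notMem hnot]
    have : ¬ (c : ℕ) = (a : ℕ) := by omega
    rw [if_neg this]
    simp

lemma vwt_move' (s : Finset (Fin (m+1))) (a : Fin m) (ha : a.succ ∈ s)
    (ha' : a.castSucc ∉ s) (c : Fin m) :
    vwt s c = vwt (insert a.castSucc (s.erase a.succ)) c
      + (if (c : ℕ) = (a : ℕ) then 1 else 0) := by
  classical
  have h1 : a.castSucc ∈ insert a.castSucc (s.erase a.succ) := Finset.mem_insert_self _ _
  have h2 : a.succ ∉ insert a.castSucc (s.erase a.succ) := by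
    simp only [Finset.mem_insert]
    rintro (h | h)
    · exact castSucc_ne_succ a h.symm
    · exact (Finset.notMem_erase _ _) h
  have h3 : insert a.succ ((insert a.castSucc (s.erase a.succ)).erase a.castSucc) = s := by
    rw [Finset.erase_insert, Finset.insert_erase ha]
    intro hmem
    exact ha' (Finset.mem_of_mem_erase hmem)
  have := vwt_move (insert a.castSucc (s.erase a.succ)) a h1 h2 c
  rw [h3] at this
  exact this

lemma card_move (w : Finset (Fin (m+1))) (hw : w.card = k) (a : Fin m)
    (ha : a.castSucc ∈ w) (ha' : a.succ ∉ w) :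
    (insert a.succ (w.erase a.castSucc)).card = k := by
  classical
  have : a.succ ∉ w.erase a.castSucc := fun h => ha' (Finset.mem_of_mem_erase h)
  rw [Finset.card_insert_of_notMem this, Finset.card_erase_of_mem ha, hw]
  have : 0 < k := hw ▸ Finset.card_pos.2 ⟨_, ha⟩
  omega

lemma card_move' (w : Finset (Fin (m+1))) (hw : w.card = k) (a : Fin m)
    (ha : a.succ ∈ w) (ha' : a.castSucc ∉ w) :
    (insert a.castSucc (w.erase a.succ)).card = k := by
  classical
  have : a.castSucc ∉ w.erase a.succ := fun h => ha' (Finset.mem_of_mem_erase h)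
  rw [Finset.card_insert_of_notMem this, Finset.card_erase_of_mem ha, hw]
  have : 0 < k := hw ▸ Finset.card_pos.2 ⟨_, ha⟩
  omega

end PartC
section PartD
variable {m k : ℕ}

lemma texp_eq_zero (x w y : IdemState m k) (c : Fin m)
    (h : vwt x.1 c ≤ vwt w.1 c ∧ vwt w.1 c ≤ vwt y.1 c ∨
         vwt y.1 c ≤ vwt w.1 c ∧ vwt w.1 c ≤ vwt x.1 c) : texp x w y c = 0 := by
  unfold texp wnum
  omega

lemma mulB_bElt_RR (x : IdemState m k) (i i' : Fin m) (hii' : (i' : ℕ) = (i : ℕ) + 1)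
    (w q0 w2 : IdemState m k)
    (h1 : i.castSucc ∈ w.1) (h2 : i.succ ∉ w.1) (h3 : i'.succ ∉ w.1)
    (hq0 : q0.1 = insert i.succ (w.1.erase i.castSucc))
    (hw2 : w2.1 = insert i'.succ (q0.1.erase i'.castSucc))
    (htx : ∀ c, texp x w w2 c = 0) :
    mulB (bElt (⟨x, w, fun _ => 0⟩ : BGen m k)) (RElt i * RElt i')
      = bElt (⟨x, w2, fun _ => 0⟩ : BGen m k) := by
  classical
  have hic : i'.castSucc = i.succ := by
    apply Fin.ext
    simp [hii']
  have hq1 : i'.castSucc ∈ q0.1 := by rw [hq0, hic]; exact Finset.mem_insert_self _ _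
  have hq2 : i'.succ ∉ q0.1 := by
    rw [hq0]
    simp only [Finset.mem_insert]
    rintro (h | h)
    · have := congrArg Fin.val h
      simp [hii'] at this
    · exact h3 (Finset.mem_of_mem_erase h)
  -- the two inner texp vanishing facts
  have hvq0 : ∀ c : Fin m, vwt q0.1 c = vwt w.1 c + (if (c:ℕ) = (i:ℕ) then 1 else 0) := by
    intro c; rw [hq0]; exact vwt_move _ _ h1 h2 c
  have hvw2 : ∀ c : Fin m, vwt w2.1 c = vwt q0.1 c + (if (c:ℕ) = (i':ℕ) then 1 else 0) := by
    intro c; rw [hw2]; exact vwt_move _ _ hq1 hq2 c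
  have htmid : ∀ c : Fin m, texp w q0 w2 c = 0 := by
    intro c
    have e1 := hvq0 c
    have e2 := hvw2 c
    unfold texp wnum
    split_ifs at e1 e2 <;> omega
  rw [mul_def]
  unfold RElt
  rw [mulB_sum_left]
  simp only [mulB_sum_right]
  rw [Finset.sum_eq_single ((w, q0) : IdemState m k × IdemState m k)]
  · rw [Finset.sum_eq_single ((q0, w2) : IdemState m k × IdemState m k)]
    · rw [if_pos ⟨h1, h2, hq0⟩, if_pos ⟨hq1, hq2, hw2⟩]
      unfold bElt
      rw [mulB_single_single]
      have hm1 : mulBGen (⟨w, q0, fun _ => 0⟩ : BGen m k) ⟨q0, w2, fun _ => 0⟩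
          = some ⟨w, w2, fun _ => 0⟩ := by
        simp [mulBGen, htmid]
      rw [hm1]
      rw [mulB_single_single]
      have hm2 : mulBGen (⟨x, w, fun _ => 0⟩ : BGen m k) ⟨w, w2, fun _ => 0⟩
          = some ⟨x, w2, fun _ => 0⟩ := by
        simp [mulBGen, htx]
      rw [hm2]
      norm_num
      rfl
    · intro q _ hq
      by_cases hc2 : i'.castSucc ∈ q.1.1 ∧ i'.succ ∉ q.1.1 ∧
          q.2.1 = insert i'.succ (q.1.1.erase i'.castSucc)
      · rw [if_pos ⟨h1, h2, hq0⟩, if_pos hc2]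
        unfold bElt
        rw [mulB_single_single]
        by_cases hqq : q0 = q.1
        · exfalso
          apply hq
          have : q.2 = w2 := by
            apply Subtype.ext
            rw [hc2.2.2, hw2, ← hqq]
          rw [Prod.ext_iff]
          exact ⟨hqq.symm, this⟩
        · have : mulBGen (⟨w, q0, fun _ => 0⟩ : BGen m k) ⟨q.1, q.2, fun _ => 0⟩ = none := by
            simp only [mulBGen]
            rw [if_neg]
            simpa using hqq
          rw [this]
          erw [mulB_zero_right]
      · rw [if_neg hc2, mulB_zero_right, mulB_zero_right]
    · intro h
      exact absurd (Finset.mem_univ _) h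
  · intro p _ hp
    apply Finset.sum_eq_zero
    intro q _
    by_cases hc1 : i.castSucc ∈ p.1.1 ∧ i.succ ∉ p.1.1 ∧
        p.2.1 = insert i.succ (p.1.1.erase i.castSucc)
    · by_cases hc2 : i'.castSucc ∈ q.1.1 ∧ i'.succ ∉ q.1.1 ∧
          q.2.1 = insert i'.succ (q.1.1.erase i'.castSucc)
      · rw [if_pos hc1, if_pos hc2]
        unfold bElt
        rw [mulB_single_single]
        by_cases hpq : p.2 = q.1
        · rw [show mulBGen (⟨p.1, p.2, fun _ => 0⟩ : BGen m k) ⟨q.1, q.2, fun _ => 0⟩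
              = some ⟨p.1, q.2, fun c => 0 + 0 + texp p.1 p.2 q.2 c⟩ from by
            simp only [mulBGen]
            rw [if_pos hpq]]
          rw [mulB_single_single]
          by_cases hwp : w = p.1
          · exfalso
            apply hp
            have : p.2 = q0 := by
              apply Subtype.ext
              rw [hc1.2.2, hq0, ← hwp]
            rw [Prod.ext_iff]
            exact ⟨hwp.symm, this⟩
          · rw [show mulBGen (⟨x, w, fun _ => 0⟩ : BGen m k)
                ⟨p.1, q.2, fun c => 0 + 0 + texp p.1 p.2 q.2 c⟩ = none from by
              simp only [mulBGen]
              rw [if_neg]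
              simpa using hwp]
        · rw [show mulBGen (⟨p.1, p.2, fun _ => 0⟩ : BGen m k) ⟨q.1, q.2, fun _ => 0⟩
              = none from by
            simp only [mulBGen]
            rw [if_neg]
            simpa using hpq]
          erw [mulB_zero_right]
      · rw [if_neg hc2, mulB_zero_right, mulB_zero_right]
    · rw [if_neg hc1, mulB_zero_left, mulB_zero_right]
  · intro h
    exact absurd (Finset.mem_univ _) h

end PartD
section PartE
variable {m k : ℕ}

lemma mulB_bElt_LL (x : IdemState m k) (i i' : Fin m) (hii' : (i' : ℕ) = (i : ℕ) + 1)
    (w q0 w2 : IdemState m k)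
    (h1 : i'.succ ∈ w.1) (h2 : i'.castSucc ∉ w.1) (h3 : i.castSucc ∉ w.1)
    (hq0 : q0.1 = insert i'.castSucc (w.1.erase i'.succ))
    (hw2 : w2.1 = insert i.castSucc (q0.1.erase i.succ))
    (htx : ∀ c, texp x w w2 c = 0) :
    mulB (bElt (⟨x, w, fun _ => 0⟩ : BGen m k)) (LElt i' * LElt i)
      = bElt (⟨x, w2, fun _ => 0⟩ : BGen m k) := by
  classical
  have hic : i'.castSucc = i.succ := by
    apply Fin.ext
    simp [hii']
  have hq1 : i.succ ∈ q0.1 := by rw [hq0, ← hic]; exact Finset.mem_insert_self _ _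
  have hq2 : i.castSucc ∉ q0.1 := by
    rw [hq0]
    simp only [Finset.mem_insert]
    rintro (h | h)
    · have := congrArg Fin.val h
      simp [hii'] at this
    · exact h3 (Finset.mem_of_mem_erase h)
  have hvq0 : ∀ c : Fin m, vwt w.1 c = vwt q0.1 c + (if (c:ℕ) = (i':ℕ) then 1 else 0) := by
    intro c
    have := vwt_move' w.1 i' h1 h2 c
    rw [← hq0] at this
    exact this
  have hvw2 : ∀ c : Fin m, vwt q0.1 c = vwt w2.1 c + (if (c:ℕ) = (i:ℕ) then 1 else 0) := by
    intro c
    have := vwt_move' q0.1 i hq1 hq2 c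
    rw [← hw2] at this
    exact this
  have htmid : ∀ c : Fin m, texp w q0 w2 c = 0 := by
    intro c
    have e1 := hvq0 c
    have e2 := hvw2 c
    unfold texp wnum
    split_ifs at e1 e2 <;> omega
  rw [mul_def]
  unfold LElt
  rw [mulB_sum_left]
  simp only [mulB_sum_right]
  rw [Finset.sum_eq_single ((w, q0) : IdemState m k × IdemState m k)]
  · rw [Finset.sum_eq_single ((q0, w2) : IdemState m k × IdemState m k)]
    · rw [if_pos ⟨h1, h2, hq0⟩, if_pos ⟨hq1, hq2, hw2⟩]
      unfold bElt
      rw [mulB_single_single]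
      have hm1 : mulBGen (⟨w, q0, fun _ => 0⟩ : BGen m k) ⟨q0, w2, fun _ => 0⟩
          = some ⟨w, w2, fun _ => 0⟩ := by
        simp [mulBGen, htmid]
      rw [hm1]
      rw [mulB_single_single]
      have hm2 : mulBGen (⟨x, w, fun _ => 0⟩ : BGen m k) ⟨w, w2, fun _ => 0⟩
          = some ⟨x, w2, fun _ => 0⟩ := by
        simp [mulBGen, htx]
      rw [hm2]
      norm_num
      rfl
    · intro q _ hq
      by_cases hc2 : i.succ ∈ q.1.1 ∧ i.castSucc ∉ q.1.1 ∧
          q.2.1 = insert i.castSucc (q.1.1.erase i.succ)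
      · rw [if_pos ⟨h1, h2, hq0⟩, if_pos hc2]
        unfold bElt
        rw [mulB_single_single]
        by_cases hqq : q0 = q.1
        · exfalso
          apply hq
          have : q.2 = w2 := by
            apply Subtype.ext
            rw [hc2.2.2, hw2, ← hqq]
          rw [Prod.ext_iff]
          exact ⟨hqq.symm, this⟩
        · have : mulBGen (⟨w, q0, fun _ => 0⟩ : BGen m k) ⟨q.1, q.2, fun _ => 0⟩ = none := by
            simp only [mulBGen]
            rw [if_neg]
            simpa using hqq
          rw [this]
          erw [mulB_zero_right]
      · rw [if_neg hc2, mulB_zero_right, mulB_zero_right]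
    · intro h
      exact absurd (Finset.mem_univ _) h
  · intro p _ hp
    apply Finset.sum_eq_zero
    intro q _
    by_cases hc1 : i'.succ ∈ p.1.1 ∧ i'.castSucc ∉ p.1.1 ∧
        p.2.1 = insert i'.castSucc (p.1.1.erase i'.succ)
    · by_cases hc2 : i.succ ∈ q.1.1 ∧ i.castSucc ∉ q.1.1 ∧
          q.2.1 = insert i.castSucc (q.1.1.erase i.succ)
      · rw [if_pos hc1, if_pos hc2]
        unfold bElt
        rw [mulB_single_single]
        by_cases hpq : p.2 = q.1
        · rw [show mulBGen (⟨p.1, p.2, fun _ => 0⟩ : BGen m k) ⟨q.1, q.2, fun _ => 0⟩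
              = some ⟨p.1, q.2, fun c => 0 + 0 + texp p.1 p.2 q.2 c⟩ from by
            simp only [mulBGen]
            rw [if_pos hpq]]
          rw [mulB_single_single]
          by_cases hwp : w = p.1
          · exfalso
            apply hp
            have : p.2 = q0 := by
              apply Subtype.ext
              rw [hc1.2.2, hq0, ← hwp]
            rw [Prod.ext_iff]
            exact ⟨hwp.symm, this⟩
          · rw [show mulBGen (⟨x, w, fun _ => 0⟩ : BGen m k)
                ⟨p.1, q.2, fun c => 0 + 0 + texp p.1 p.2 q.2 c⟩ = none from by
              simp only [mulBGen]
              rw [if_neg]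
              simpa using hwp]
        · rw [show mulBGen (⟨p.1, p.2, fun _ => 0⟩ : BGen m k) ⟨q.1, q.2, fun _ => 0⟩
              = none from by
            simp only [mulBGen]
            rw [if_neg]
            simpa using hpq]
          erw [mulB_zero_right]
      · rw [if_neg hc2, mulB_zero_right, mulB_zero_right]
    · rw [if_neg hc1, mulB_zero_left, mulB_zero_right]
  · intro h
    exact absurd (Finset.mem_univ _) h

end PartE
section PartF
variable {m k : ℕ}

lemma bElt_mem_JIdeal_R (x y : IdemState m k) (s : Fin m → ℕ) (i i' : Fin m)
    (hii' : (i' : ℕ) = (i : ℕ) + 1)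
    (w : IdemState m k) (h1 : i.castSucc ∈ w.1) (h2 : i.succ ∉ w.1) (h3 : i'.succ ∉ w.1)
    (hlow : ∀ c, vwt x.1 c ≤ vwt w.1 c)
    (hhigh : ∀ c, vwt w.1 c ≤ max (vwt x.1 c) (vwt y.1 c))
    (hstrict : ∀ c : Fin m, ((c:ℕ) = (i:ℕ) ∨ (c:ℕ) = (i':ℕ)) → vwt w.1 c < vwt y.1 c) :
    bElt (⟨x, y, s⟩ : BGen m k) ∈ JIdeal m k := by
  classical
  have hic : i'.castSucc = i.succ := by
    apply Fin.ext
    simp [hii']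
  set q0 : IdemState m k := ⟨insert i.succ (w.1.erase i.castSucc),
    card_move w.1 w.2 i h1 h2⟩ with hq0def
  have hq1 : i'.castSucc ∈ q0.1 := by
    show _ ∈ insert i.succ _
    rw [hic]
    exact Finset.mem_insert_self _ _
  have hq2 : i'.succ ∉ q0.1 := by
    show _ ∉ insert i.succ _
    simp only [Finset.mem_insert]
    rintro (h | h)
    · have := congrArg Fin.val h
      simp only [Fin.val_succ, Fin.coe_castSucc] at this
      omega
    · exact h3 (Finset.mem_of_mem_erase h)
  set w2 : IdemState m k := ⟨insert i'.succ (q0.1.erase i'.castSucc),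
    card_move q0.1 q0.2 i' hq1 hq2⟩ with hw2def
  have hvq0 : ∀ c : Fin m, vwt q0.1 c = vwt w.1 c + (if (c:ℕ) = (i:ℕ) then 1 else 0) :=
    fun c => vwt_move w.1 i h1 h2 c
  have hvw2 : ∀ c : Fin m, vwt w2.1 c = vwt q0.1 c + (if (c:ℕ) = (i':ℕ) then 1 else 0) :=
    fun c => vwt_move q0.1 i' hq1 hq2 c
  have htx : ∀ c, texp x w w2 c = 0 := by
    intro c
    have e1 := hvq0 c
    have e2 := hvw2 c
    have l1 := hlow c
    unfold texp wnum
    split_ifs at e1 e2 <;> omega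
  have hty : ∀ c, texp x w2 y c = 0 := by
    intro c
    have e1 := hvq0 c
    have e2 := hvw2 c
    have l1 := hlow c
    have l2 := hhigh c
    by_cases hc : (c:ℕ) = (i:ℕ) ∨ (c:ℕ) = (i':ℕ)
    · have l3 := hstrict c hc
      unfold texp wnum
      split_ifs at e1 e2 <;> omega
    · unfold texp wnum
      split_ifs at e1 e2 <;> omega
  apply AddSubgroup.subset_closure
  refine ⟨RElt i * RElt i', Or.inl ⟨i, i', hii', Or.inr rfl⟩,
    bElt ⟨x, w, fun _ => 0⟩, bElt ⟨w2, y, s⟩, ?_⟩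
  have hag := mulB_bElt_RR x i i' hii' w q0 w2 h1 h2 h3 rfl rfl htx
  show bElt (⟨x, y, s⟩ : BGen m k)
    = mulB (mulB (bElt ⟨x, w, fun _ => 0⟩) (RElt i * RElt i')) (bElt ⟨w2, y, s⟩)
  rw [hag]
  unfold bElt
  rw [mulB_single_single]
  have : mulBGen (⟨x, w2, fun _ => 0⟩ : BGen m k) ⟨w2, y, s⟩ = some ⟨x, y, s⟩ := by
    simp [mulBGen, hty]
  rw [this]
  norm_num
  rfl

lemma bElt_mem_JIdeal_L (x y : IdemState m k) (s : Fin m → ℕ) (i i' : Fin m)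
    (hii' : (i' : ℕ) = (i : ℕ) + 1)
    (wt : IdemState m k) (h1 : i.castSucc ∈ wt.1) (h2 : i.succ ∉ wt.1) (h3 : i'.succ ∉ wt.1)
    (hlow : ∀ c, vwt y.1 c ≤ vwt wt.1 c)
    (hhigh : ∀ c, vwt wt.1 c ≤ max (vwt x.1 c) (vwt y.1 c))
    (hstrict : ∀ c : Fin m, ((c:ℕ) = (i:ℕ) ∨ (c:ℕ) = (i':ℕ)) → vwt wt.1 c < vwt x.1 c) :
    bElt (⟨x, y, s⟩ : BGen m k) ∈ JIdeal m k := by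
  classical
  have hic : i'.castSucc = i.succ := by
    apply Fin.ext
    simp [hii']
  set mid : IdemState m k := ⟨insert i.succ (wt.1.erase i.castSucc),
    card_move wt.1 wt.2 i h1 h2⟩ with hmiddef
  have hm1 : i'.castSucc ∈ mid.1 := by
    show _ ∈ insert i.succ _
    rw [hic]
    exact Finset.mem_insert_self _ _
  have hm2 : i'.succ ∉ mid.1 := by
    show _ ∉ insert i.succ _
    simp only [Finset.mem_insert]
    rintro (h | h)
    · have := congrArg Fin.val h
      simp only [Fin.val_succ, Fin.coe_castSucc] at this
      omega
    · exact h3 (Finset.mem_of_mem_erase h)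
  set w : IdemState m k := ⟨insert i'.succ (mid.1.erase i'.castSucc),
    card_move mid.1 mid.2 i' hm1 hm2⟩ with hwdef
  -- hypotheses for mulB_bElt_LL with chain w → mid → wt
  have hw1 : i'.succ ∈ w.1 := Finset.mem_insert_self _ _
  have hw2 : i'.castSucc ∉ w.1 := by
    show _ ∉ insert i'.succ _
    simp only [Finset.mem_insert]
    rintro (h | h)
    · have := congrArg Fin.val h
      simp only [Fin.val_succ, Fin.coe_castSucc] at this
      omega
    · exact Finset.notMem_erase _ _ h
  have hw3 : i.castSucc ∉ w.1 := by
    show _ ∉ insert i'.succ _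
    simp only [Finset.mem_insert]
    rintro (h | h)
    · have := congrArg Fin.val h
      simp only [Fin.val_succ, Fin.coe_castSucc] at this
      omega
    · have hmem := Finset.mem_of_mem_erase h
      rcases Finset.mem_insert.1 hmem with h' | h'
      · have := congrArg Fin.val h'
        simp only [Fin.val_succ, Fin.coe_castSucc] at this
        omega
      · exact Finset.notMem_erase _ _ h'
  have hq0 : mid.1 = insert i'.castSucc (w.1.erase i'.succ) := by
    show _ = insert i'.castSucc ((insert i'.succ (mid.1.erase i'.castSucc)).erase i'.succ)
    rw [Finset.erase_insert, Finset.insert_erase hm1]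
    intro hmem
    exact hm2 (Finset.mem_of_mem_erase hmem)
  have hw2eq : wt.1 = insert i.castSucc (mid.1.erase i.succ) := by
    show _ = insert i.castSucc ((insert i.succ (wt.1.erase i.castSucc)).erase i.succ)
    rw [Finset.erase_insert, Finset.insert_erase h1]
    intro hmem
    exact h2 (Finset.mem_of_mem_erase hmem)
  have hvmid : ∀ c : Fin m, vwt mid.1 c = vwt wt.1 c + (if (c:ℕ) = (i:ℕ) then 1 else 0) :=
    fun c => vwt_move wt.1 i h1 h2 c
  have hvw : ∀ c : Fin m, vwt w.1 c = vwt mid.1 c + (if (c:ℕ) = (i':ℕ) then 1 else 0) :=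
    fun c => vwt_move mid.1 i' hm1 hm2 c
  have htx : ∀ c, texp x w wt c = 0 := by
    intro c
    have e1 := hvmid c
    have e2 := hvw c
    by_cases hc : (c:ℕ) = (i:ℕ) ∨ (c:ℕ) = (i':ℕ)
    · have l3 := hstrict c hc
      unfold texp wnum
      split_ifs at e1 e2 <;> omega
    · unfold texp wnum
      split_ifs at e1 e2 <;> omega
  have hty : ∀ c, texp x wt y c = 0 := by
    intro c
    have l1 := hlow c
    have l2 := hhigh c
    unfold texp wnum
    omega
  apply AddSubgroup.subset_closure
  refine ⟨LElt i' * LElt i, Or.inl ⟨i, i', hii', Or.inl rfl⟩,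
    bElt ⟨x, w, fun _ => 0⟩, bElt ⟨wt, y, s⟩, ?_⟩
  have hag := mulB_bElt_LL x i i' hii' w mid wt hw1 hw2 hw3 hq0 hw2eq htx
  show bElt (⟨x, y, s⟩ : BGen m k)
    = mulB (mulB (bElt ⟨x, w, fun _ => 0⟩) (LElt i' * LElt i)) (bElt ⟨wt, y, s⟩)
  rw [hag]
  unfold bElt
  rw [mulB_single_single]
  have : mulBGen (⟨x, wt, fun _ => 0⟩ : BGen m k) ⟨wt, y, s⟩ = some ⟨x, y, s⟩ := by
    simp [mulBGen, hty]
  rw [this]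
  norm_num
  rfl

end PartF
section PartG
variable {m k : ℕ}
open Finset

lemma strictMono_nat_gap {n : ℕ} {f : Fin n → ℕ} (hf : StrictMono f) :
    ∀ a b : Fin n, a ≤ b → f a + (b.val - a.val) ≤ f b := by
  intro a b hab
  have key : ∀ d : ℕ, ∀ b : Fin n, b.val = a.val + d → f a + d ≤ f b := by
    intro d
    induction d with
    | zero =>
      intro b hb
      have hh : a = b := Fin.ext (by omega)
      subst hh
      omega
    | succ d ih =>
      intro b hb
      have hblt : (⟨a.val + d, by omega⟩ : Fin n) < b := by
        rw [Fin.lt_def]; simp; omega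
      have h1 := ih ⟨a.val + d, by omega⟩ rfl
      have h2 := hf hblt
      omega
  have hh : b.val = a.val + (b.val - a.val) := by
    have := (Fin.le_def).1 hab
    omega
  have := key (b.val - a.val) b hh
  omega

lemma vwt_image (g : Fin k → Fin (m+1)) (hg : Function.Injective g) (c : Fin m) :
    vwt (Finset.image g Finset.univ) c
      = (Finset.univ.filter (fun t => (c : ℕ) < (g t).val)).card := by
  classical
  unfold vwt
  rw [Finset.filter_image, Finset.card_image_of_injective _ hg]

lemma vwt_enum (x : Finset (Fin (m+1))) (hx : x.card = k) (c : Fin m) :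
    vwt x c
      = (Finset.univ.filter (fun t : Fin k => (c : ℕ) < (x.orderEmbOfFin hx t).val)).card := by
  classical
  have hxim : x = Finset.image (x.orderEmbOfFin hx) Finset.univ := by
    ext a
    simp only [Finset.mem_image, Finset.mem_univ, true_and]
    constructor
    · intro ha
      have : a ∈ Set.range (x.orderEmbOfFin hx) := by
        rw [Finset.range_orderEmbOfFin]
        exact ha
      obtain ⟨t, ht⟩ := this
      exact ⟨t, ht⟩
    · rintro ⟨t, rfl⟩
      exact Finset.orderEmbOfFin_mem _ _ _
  conv_lhs => rw [hxim]
  exact vwt_image _ (x.orderEmbOfFin hx).injective c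

lemma construct (x y : IdemState m k) (j : Fin k)
    (hj : ((x.1.orderEmbOfFin x.2 j) : Fin (m+1)).val + 2
        ≤ ((y.1.orderEmbOfFin y.2 j) : Fin (m+1)).val) :
    ∃ (i i' : Fin m) (w : IdemState m k), (i' : ℕ) = (i : ℕ) + 1 ∧
      i.castSucc ∈ w.1 ∧ i.succ ∉ w.1 ∧ i'.succ ∉ w.1 ∧
      (∀ c, vwt x.1 c ≤ vwt w.1 c) ∧
      (∀ c, vwt w.1 c ≤ max (vwt x.1 c) (vwt y.1 c)) ∧
      (∀ c : Fin m, ((c:ℕ) = (i:ℕ) ∨ (c:ℕ) = (i':ℕ)) → vwt w.1 c < vwt y.1 c) := by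
  classical
  set ex : Fin k → ℕ := fun t => ((x.1.orderEmbOfFin x.2 t) : Fin (m+1)).val with hex
  set ey : Fin k → ℕ := fun t => ((y.1.orderEmbOfFin y.2 t) : Fin (m+1)).val with hey
  have hj' : ex j + 2 ≤ ey j := hj
  have hexm : StrictMono ex := fun a b hab => (x.1.orderEmbOfFin x.2).strictMono hab
  have heym : StrictMono ey := fun a b hab => (y.1.orderEmbOfFin y.2).strictMono hab
  have heyle : ∀ t, ey t ≤ m := fun t => Nat.lt_succ_iff.1 ((y.1.orderEmbOfFin y.2 t).isLt)
  have hexle' : ∀ t, ex t ≤ m := fun t => Nat.lt_succ_iff.1 ((x.1.orderEmbOfFin x.2 t).isLt)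
  have hgap : ∀ t : Fin k, j ≤ t → ey j + (t.val - j.val) ≤ ey t :=
    fun t ht => strictMono_nat_gap heym j t ht
  set wfn : Fin k → ℕ :=
    fun t => if t ≤ j then ex t else max (ex t) (ex j + 2 + (t.val - j.val)) with hwfn
  have hwle : ∀ t, wfn t ≤ m := by
    intro t
    simp only [hwfn]
    split_ifs with h
    · exact hexle' t
    · have hjt : j ≤ t := le_of_lt (lt_of_not_ge h)
      have h1 := hgap t hjt
      have h2 := heyle t
      have h3 := hexle' t
      omega
  have hexwf : ∀ t, ex t ≤ wfn t := by
    intro t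
    simp only [hwfn]
    split_ifs with h
    · exact le_refl _
    · exact le_max_left _ _
  have hbig : ∀ t, ¬ t ≤ j → ex j + 2 + (t.val - j.val) ≤ wfn t := by
    intro t h
    simp only [hwfn, if_neg h]
    exact le_max_right _ _
  have hsmall : ∀ t, t ≤ j → wfn t ≤ ex j := by
    intro t h
    simp only [hwfn, if_pos h]
    exact hexm.monotone h
  have hwmono : StrictMono wfn := by
    intro a b hab
    simp only [hwfn]
    have hvab : a.val < b.val := hab
    split_ifs with ha hb hb
    · exact hexm hab
    · have h1 : ex a ≤ ex j := hexm.monotone ha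
      have h2 : ex j + 2 + (b.val - j.val) ≤ max (ex b) (ex j + 2 + (b.val - j.val)) :=
        le_max_right _ _
      omega
    · exact absurd (le_trans (le_of_lt hab) hb) ha
    · have h1 : ex a < ex b := hexm hab
      have hja : j < a := lt_of_not_ge ha
      have hvja : j.val < a.val := hja
      exact max_lt_max h1 (by omega)
  set wfin : Fin k → Fin (m+1) := fun t => ⟨wfn t, Nat.lt_succ_of_le (hwle t)⟩ with hwfin
  have hwfinmono : StrictMono wfin := fun a b hab => by
    rw [Fin.lt_def]; exact hwmono hab
  have hwfv : ∀ t, (wfin t).val = wfn t := fun t => rfl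
  have him : ex j < m := by have := heyle j; omega
  have him' : ex j + 1 < m := by have := heyle j; omega
  have hcard : (Finset.image wfin Finset.univ).card = k := by
    rw [Finset.card_image_of_injective _ hwfinmono.injective, Finset.card_univ,
      Fintype.card_fin]
  have vwx : ∀ c : Fin m, vwt x.1 c
      = (Finset.univ.filter (fun t : Fin k => (c:ℕ) < ex t)).card :=
    fun c => vwt_enum x.1 x.2 c
  have vwy : ∀ c : Fin m, vwt y.1 c
      = (Finset.univ.filter (fun t : Fin k => (c:ℕ) < ey t)).card :=
    fun c => vwt_enum y.1 y.2 c
  have vww : ∀ c : Fin m, vwt (Finset.image wfin Finset.univ) c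
      = (Finset.univ.filter (fun t : Fin k => (c:ℕ) < wfn t)).card :=
    fun c => vwt_image wfin hwfinmono.injective c
  have hnotmem : ∀ b : Fin (m+1), ex j < b.val → b.val < ex j + 3 →
      b ∉ Finset.image wfin Finset.univ := by
    intro b hb1 hb2 hmem
    obtain ⟨t, -, ht⟩ := Finset.mem_image.1 hmem
    have hval : wfn t = b.val := congrArg Fin.val ht
    by_cases h : t ≤ j
    · have := hsmall t h
      omega
    · have := hbig t h
      have hvjt : j.val < t.val := lt_of_not_ge h
      omega
  refine ⟨⟨ex j, him⟩, ⟨ex j + 1, him'⟩,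
    ⟨Finset.image wfin Finset.univ, hcard⟩, rfl, ?_, ?_, ?_, ?_, ?_, ?_⟩
  · -- i.castSucc ∈ w
    simp only [Finset.mem_image]
    refine ⟨j, Finset.mem_univ _, ?_⟩
    apply Fin.ext
    show wfn j = ex j
    simp only [hwfn, if_pos (le_refl j)]
  · -- i.succ ∉ w
    have hs1 : (((⟨ex j, him⟩ : Fin m).succ : Fin (m+1))).val = ex j + 1 := rfl
    exact hnotmem _ (by rw [hs1]; omega) (by rw [hs1]; omega)
  · -- i'.succ ∉ w
    have hs2 : (((⟨ex j + 1, him'⟩ : Fin m).succ : Fin (m+1))).val = ex j + 2 := rfl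
    exact hnotmem _ (by rw [hs2]; omega) (by rw [hs2]; omega)
  · -- hlow
    intro c
    rw [vwx c, vww c]
    apply Finset.card_le_card
    intro t ht
    rw [Finset.mem_filter] at *
    exact ⟨ht.1, lt_of_lt_of_le ht.2 (hexwf t)⟩
  · -- hhigh
    intro c
    rw [vwx c, vwy c, vww c]
    by_cases hcase :
        (Finset.univ.filter (fun t : Fin k => (c:ℕ) < wfn t)).card
        ≤ (Finset.univ.filter (fun t : Fin k => (c:ℕ) < ex t)).card
    · exact le_trans hcase (le_max_left _ _)
    · refine le_trans ?_ (le_max_right _ _)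
      push_neg at hcase
      have hBne : (Finset.univ.filter (fun t : Fin k => (c:ℕ) < wfn t)).Nonempty := by
        rw [← Finset.card_pos]
        omega
      set t0 := (Finset.univ.filter (fun t : Fin k => (c:ℕ) < wfn t)).min' hBne with ht0
      have ht0B := Finset.min'_mem _ hBne
      rw [← ht0] at ht0B
      have ht0w : (c:ℕ) < wfn t0 := (Finset.mem_filter.1 ht0B).2
      by_cases hext0 : (c:ℕ) < ex t0
      · exfalso
        have hBA : (Finset.univ.filter (fun t : Fin k => (c:ℕ) < wfn t))
            ⊆ (Finset.univ.filter (fun t : Fin k => (c:ℕ) < ex t)) := by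
          intro t ht
          rw [Finset.mem_filter]
          refine ⟨Finset.mem_univ _, ?_⟩
          have h1 : t0 ≤ t := by rw [ht0]; exact Finset.min'_le _ t ht
          exact lt_of_lt_of_le hext0 (hexm.monotone h1)
        exact absurd (Finset.card_le_card hBA) (by omega)
      · push_neg at hext0
        have hjt0 : ¬ t0 ≤ j := by
          intro h
          have h2 : wfn t0 = ex t0 := by simp only [hwfn, if_pos h]
          omega
        have hc1 : (c:ℕ) < ex j + 2 + (t0.val - j.val) := by
          have := hbig t0 hjt0
          simp only [hwfn, if_neg hjt0] at ht0w
          omega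
        have hjt0' : j ≤ t0 := le_of_lt (lt_of_not_ge hjt0)
        have hey0 : (c:ℕ) < ey t0 := by
          have := hgap t0 hjt0'
          omega
        apply Finset.card_le_card
        intro t ht
        rw [Finset.mem_filter]
        refine ⟨Finset.mem_univ _, ?_⟩
        have h1 : t0 ≤ t := by rw [ht0]; exact Finset.min'_le _ t ht
        exact lt_of_lt_of_le hey0 (heym.monotone h1)
  · -- hstrict
    intro c hc
    have hcv : (c:ℕ) = ex j ∨ (c:ℕ) = ex j + 1 := hc
    rw [vwy c, vww c]
    apply Finset.card_lt_card
    rw [Finset.ssubset_iff_of_subset]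
    · refine ⟨j, ?_, ?_⟩
      · rw [Finset.mem_filter]
        refine ⟨Finset.mem_univ _, ?_⟩
        omega
      · rw [Finset.mem_filter]
        rintro ⟨-, hlt⟩
        have := hsmall j (le_refl j)
        omega
    · intro t ht
      rw [Finset.mem_filter] at *
      refine ⟨Finset.mem_univ _, ?_⟩
      have hwt := ht.2
      by_cases h : t ≤ j
      · have := hsmall t h
        omega
      · have hjt : j ≤ t := le_of_lt (lt_of_not_ge h)
        have h1 := hgap t hjt
        have h2 := hbig t h
        omega

end PartG
section PartH
variable {m k : ℕ}

lemma far_bElt_mem (x y : IdemState m k) (hfar : FarStates x y) (s : Fin m → ℕ) :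
    bElt (⟨x, y, s⟩ : BGen m k) ∈ JIdeal m k := by
  obtain ⟨j, hj⟩ := hfar
  rw [Finset.coe_orderIsoOfFin_apply, Finset.coe_orderIsoOfFin_apply] at hj
  have hcases : (x.1.orderEmbOfFin x.2 j).val + 2 ≤ (y.1.orderEmbOfFin y.2 j).val ∨
      (y.1.orderEmbOfFin y.2 j).val + 2 ≤ (x.1.orderEmbOfFin x.2 j).val := by
    rcases abs_cases (((x.1.orderEmbOfFin x.2 j).val : ℤ)
        - ((y.1.orderEmbOfFin y.2 j).val : ℤ)) with ⟨heq, -⟩ | ⟨heq, -⟩ <;>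
      rw [heq] at hj <;> omega
  rcases hcases with h | h
  · obtain ⟨i, i', w, hii', h1, h2, h3, hlow, hhigh, hstrict⟩ := construct x y j h
    exact bElt_mem_JIdeal_R x y s i i' hii' w h1 h2 h3 hlow hhigh hstrict
  · obtain ⟨i, i', w, hii', h1, h2, h3, hlow, hhigh, hstrict⟩ := construct y x j h
    refine bElt_mem_JIdeal_L x y s i i' hii' w h1 h2 h3 hlow ?_ hstrict
    intro c
    rw [max_comm]
    exact hhigh c

end PartH

/-- In the quotient algebra `B(m,k) = B₀(m,k)/J`, if the
idempotent states `x` and `y` are far (some pair of entries of their increasing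
enumerations differs by more than `1`), then `I_x · B(m,k) · I_y = 0`; that is,
`I_x · a · I_y ∈ J` for every `a ∈ B₀(m,k)`. -/
theorem far_states_kill (m k : ℕ) (hk : k ≤ m + 1) (x y : IdemState m k)
    (hfar : FarStates x y) :
    ∀ a : B0 m k, idemElt x * a * idemElt y ∈ JIdeal m k := by
  intro a
  rw [mul_def, mul_def]
  induction a using Finsupp.induction with
  | zero =>
    erw [mulB_zero_right, mulB_zero_left]
    exact (JIdeal m k).zero_mem
  | single_add g b f hg hb ih =>
    erw [mulB_add_right (idemElt x) (Finsupp.single g b) f, mulB_add_left]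
    refine AddSubgroup.add_mem _ ?_ ih
    rw [idem_single_idem]
    split_ifs with h
    · have hb1 : b = 1 := by revert hb; revert b; decide
      subst hb1
      exact far_bElt_mem x y hfar g.s
    · exact (JIdeal m k).zero_mem
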